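/- Let ≻_HP be a hope-and-prepare preference with representation (u, C_HP, D_HP) and let ≻_B be a Bewley preference with representation (u, C_B), with the same utility function u. Then ≻_B is more conservative than ≻_HP if and only if C_HP ∪ D_HP ⊆ C_B. -/

import Mathlib

/-!
Framework: Anscombe–Aumann acts, finitely additive probability measures,
simple acts, hope-and-prepare preferences (Bastianello–Hill style setup).
-/

open Set

section Framework

variable (S : Type*) [MeasurableSpace S]

/-- The measurable sets (events) of `S`, as a subtype. -/
abbrev MSet := {A : Set S // MeasurableSet A}

/-- Finitely additive probability measures on `(S, Σ)`, viewed as real-valued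
set functions on events.  The weak* topology is the topology of pointwise
convergence on events, i.e. the product topology on `MSet S → ℝ`. -/
def ProbCharges : Set (MSet S → ℝ) :=
  {p | (∀ A, 0 ≤ p A) ∧ p ⟨Set.univ, MeasurableSet.univ⟩ = 1 ∧
    ∀ A B : MSet S, Disjoint A.1 B.1 → p ⟨A.1 ∪ B.1, A.2.union B.2⟩ = p A + p B}

end Framework

section Fns

variable {S : Type*} [MeasurableSpace S]

/-- `φ : S → ℝ` is a measurable simple function (an element of `B₀(Σ)`). -/
def IsSimpleFn (φ : S → ℝ) : Prop :=
  (Set.range φ).Finite ∧ ∀ y : ℝ, MeasurableSet (φ ⁻¹' {y})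

/-- The integral `∫ φ dp` of a simple function `φ` against a finitely additive
measure `p` (junk value `0` if `φ` is not simple). -/
noncomputable def fInt (p : MSet S → ℝ) (φ : S → ℝ) : ℝ :=
  @dite _ (IsSimpleFn φ) (Classical.dec _)
    (fun h => ∑ y ∈ h.1.toFinset, y * p ⟨φ ⁻¹' {y}, h.2 y⟩) (fun _ => 0)

/-- A functional `I : B₀(Σ) → ℝ` is monotonic. -/
def MonotonicFn (I : (S → ℝ) → ℝ) : Prop :=
  ∀ φ ψ, IsSimpleFn φ → IsSimpleFn ψ → (∀ s, φ s ≤ ψ s) → I φ ≤ I ψ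

/-- A functional `I : B₀(Σ) → ℝ` is constant-linear: `I(aφ + b) = a I(φ) + b`
for `a ≥ 0`, `b ∈ ℝ`. -/
def ConstLinearFn (I : (S → ℝ) → ℝ) : Prop :=
  ∀ φ, IsSimpleFn φ → ∀ a : ℝ, 0 ≤ a → ∀ b : ℝ,
    I (fun s => a * φ s + b) = a * I φ + b

end Fns

section Acts

variable {S : Type*} [MeasurableSpace S] {V : Type*} [AddCommGroup V] [Module ℝ V]

/-- `f : S → V` is a simple act with outcomes in `X`: it is `X`-valued,
takes finitely many values and is `Σ`-measurable. -/
def IsAct (X : Set V) (f : S → V) : Prop :=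
  (∀ s, f s ∈ X) ∧ (Set.range f).Finite ∧ ∀ v : V, MeasurableSet (f ⁻¹' {v})

/-- Pointwise mixture `αf + (1-α)g` of two acts. -/
def mixAct (α : ℝ) (f g : S → V) : S → V := fun s => α • f s + (1 - α) • g s

/-- The constant act with outcome `x`. -/
def constAct (S : Type*) {V : Type*} (x : V) : S → V := fun _ => x

/-- `u : V → ℝ` is affine on the convex set `X`. -/
def IsAffineOn (u : V → ℝ) (X : Set V) : Prop :=
  ∀ x ∈ X, ∀ y ∈ X, ∀ α : ℝ, 0 ≤ α → α ≤ 1 →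
    u (α • x + (1 - α) • y) = α * u x + (1 - α) * u y

/-- `u` is non-constant on `X`. -/
def NonConstOn (u : V → ℝ) (X : Set V) : Prop := ∃ x ∈ X, ∃ y ∈ X, u x ≠ u y

/-- Expected utility `∫ u(f) dp` of the act `f` under the measure `p`. -/
noncomputable def EU (u : V → ℝ) (f : S → V) (p : MSet S → ℝ) : ℝ :=
  fInt p (fun s => u (f s))

/-- Worst-case expected utility of `f` over the set of scenarios `C`. -/
noncomputable def minEU (u : V → ℝ) (C : Set (MSet S → ℝ)) (f : S → V) : ℝ :=
  sInf (EU u f '' C)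

/-- Best-case expected utility of `f` over the set of scenarios `D`. -/
noncomputable def maxEU (u : V → ℝ) (D : Set (MSet S → ℝ)) (f : S → V) : ℝ :=
  sSup (EU u f '' D)

/-- `f` and `g` are incomparable (`f ⋈ g`). -/
def Incomp (R : (S → V) → (S → V) → Prop) (f g : S → V) : Prop := ¬ R f g ∧ ¬ R g f

end Acts

section Axioms

variable {S : Type*} [MeasurableSpace S] {V : Type*} [AddCommGroup V] [Module ℝ V]
variable (X : Set V) (R : (S → V) → (S → V) → Prop)

/-- Axiom 1: `≻` is asymmetric and transitive on acts, and its restriction to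
constant acts is non-trivial and negatively transitive. -/
def PrefAx1 : Prop :=
  (∀ f g, IsAct X f → IsAct X g → R f g → ¬ R g f) ∧
  (∀ f g h, IsAct X f → IsAct X g → IsAct X h → R f g → R g h → R f h) ∧
  (∃ x ∈ X, ∃ y ∈ X, R (constAct S x) (constAct S y)) ∧
  (∀ x ∈ X, ∀ y ∈ X, ∀ z ∈ X, ¬ R (constAct S x) (constAct S y) →
    ¬ R (constAct S y) (constAct S z) → ¬ R (constAct S x) (constAct S z))

/-- Axiom 2 (continuity). -/
def PrefAx2 : Prop :=
  ∀ f g h, IsAct X f → IsAct X g → IsAct X h →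
    IsOpen {α : Set.Icc (0 : ℝ) 1 | R (mixAct (α : ℝ) f g) h} ∧
    IsOpen {α : Set.Icc (0 : ℝ) 1 | R h (mixAct (α : ℝ) f g)}

/-- Axiom 3 (certainty independence). -/
def PrefAx3 : Prop :=
  ∀ f g, IsAct X f → IsAct X g → ∀ x ∈ X, ∀ α : ℝ, 0 < α → α < 1 →
    (R f g ↔ R (mixAct α f (constAct S x)) (mixAct α g (constAct S x)))

/-- Axiom 4: for any outcome `x`, the upper and lower contour sets at the
constant act `x` are convex. -/
def PrefAx4 : Prop :=
  ∀ x ∈ X,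
    (∀ f g, IsAct X f → IsAct X g → R f (constAct S x) → R g (constAct S x) →
      ∀ α : ℝ, 0 ≤ α → α ≤ 1 → R (mixAct α f g) (constAct S x)) ∧
    (∀ f g, IsAct X f → IsAct X g → R (constAct S x) f → R (constAct S x) g →
      ∀ α : ℝ, 0 ≤ α → α ≤ 1 → R (constAct S x) (mixAct α f g))

/-- Axiom 5 (monotonicity). -/
def PrefAx5 : Prop :=
  ∀ f g, IsAct X f → IsAct X g →
    (∀ s : S, R (constAct S (f s)) (constAct S (g s))) → R f g

/-- Axiom 6: if every outcome incomparable to `f` is incomparable to `g`,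
then `f` and `g` are incomparable. -/
def PrefAx6 : Prop :=
  ∀ f g, IsAct X f → IsAct X g →
    (∀ x ∈ X, Incomp R f (constAct S x) → Incomp R g (constAct S x)) → Incomp R f g

/-- Axiom 7: if `f ⋈ x`, `x ≻ g`, `g ⋈ y` and `f ≻ y`, then `f ≻ g`. -/
def PrefAx7 : Prop :=
  ∀ f g, IsAct X f → IsAct X g → ∀ x ∈ X, ∀ y ∈ X,
    Incomp R f (constAct S x) → R (constAct S x) g →
    Incomp R g (constAct S y) → R f (constAct S y) → R f g

end Axioms

section Reps

variable {S : Type*} [MeasurableSpace S] {V : Type*} [AddCommGroup V] [Module ℝ V]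

/-- `(u, C, D)` is a hope-and-prepare representation of `R`. -/
def IsHPRep (X : Set V) (R : (S → V) → (S → V) → Prop) (u : V → ℝ)
    (C D : Set (MSet S → ℝ)) : Prop :=
  IsAffineOn u X ∧ NonConstOn u X ∧
  C.Nonempty ∧ D.Nonempty ∧ C ⊆ ProbCharges S ∧ D ⊆ ProbCharges S ∧
  IsCompact C ∧ IsCompact D ∧ Convex ℝ C ∧ Convex ℝ D ∧ (C ∩ D).Nonempty ∧
  ∀ f g, IsAct X f → IsAct X g →
    (R f g ↔ (minEU u C g < minEU u C f ∧ maxEU u D g < maxEU u D f))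

/-- `(u, C)` is a Bewley representation of `R`. -/
def IsBewleyRep (X : Set V) (R : (S → V) → (S → V) → Prop) (u : V → ℝ)
    (C : Set (MSet S → ℝ)) : Prop :=
  IsAffineOn u X ∧ NonConstOn u X ∧
  C.Nonempty ∧ C ⊆ ProbCharges S ∧ IsCompact C ∧ Convex ℝ C ∧
  ∀ f g, IsAct X f → IsAct X g → (R f g ↔ ∀ p ∈ C, EU u g p < EU u f p)

/-- `(u, C, D)` is a twofold multi-prior representation of `R`. -/
def IsTwofoldRep (X : Set V) (R : (S → V) → (S → V) → Prop) (u : V → ℝ)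
    (C D : Set (MSet S → ℝ)) : Prop :=
  IsAffineOn u X ∧ NonConstOn u X ∧
  C.Nonempty ∧ D.Nonempty ∧ C ⊆ ProbCharges S ∧ D ⊆ ProbCharges S ∧
  IsCompact C ∧ IsCompact D ∧ Convex ℝ C ∧ Convex ℝ D ∧ (C ∩ D).Nonempty ∧
  ∀ f g, IsAct X f → IsAct X g → (R f g ↔ maxEU u D g < minEU u C f)

end Reps

section AuxCharges

variable {S : Type*} [MeasurableSpace S]

/-- Evaluate a charge on an arbitrary set (junk `0` if non-measurable). -/
noncomputable def evalP (p : MSet S → ℝ) (A : Set S) : ℝ :=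
  @dite _ (MeasurableSet A) (Classical.dec _) (fun h => p ⟨A, h⟩) (fun _ => 0)

lemma evalP_eq (p : MSet S → ℝ) {A : Set S} (h : MeasurableSet A) :
    evalP p A = p ⟨A, h⟩ := dif_pos h

lemma evalP_union {p : MSet S → ℝ} (hp : p ∈ ProbCharges S) {A B : Set S}
    (hA : MeasurableSet A) (hB : MeasurableSet B) (hd : Disjoint A B) :
    evalP p (A ∪ B) = evalP p A + evalP p B := by
  rw [evalP_eq p (hA.union hB), evalP_eq p hA, evalP_eq p hB]
  exact hp.2.2 ⟨A, hA⟩ ⟨B, hB⟩ hd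

lemma evalP_empty {p : MSet S → ℝ} (hp : p ∈ ProbCharges S) :
    evalP p (∅ : Set S) = 0 := by
  have h := evalP_union hp MeasurableSet.empty MeasurableSet.empty
    (Set.disjoint_empty (∅ : Set S))
  simp only [Set.union_empty] at h
  linarith

lemma evalP_nonneg {p : MSet S → ℝ} (hp : p ∈ ProbCharges S) (A : Set S) :
    0 ≤ evalP p A := by
  rw [evalP]
  split_ifs with h
  · exact hp.1 _
  · exact le_refl 0

lemma evalP_univ {p : MSet S → ℝ} (hp : p ∈ ProbCharges S) :
    evalP p (Set.univ : Set S) = 1 := by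
  rw [evalP_eq p MeasurableSet.univ]; exact hp.2.1

lemma evalP_biUnion {p : MSet S → ℝ} (hp : p ∈ ProbCharges S) {ι : Type*}
    (J : Finset ι) (E : ι → Set S) (hE : ∀ i, MeasurableSet (E i))
    (hd : ∀ i ∈ J, ∀ j ∈ J, i ≠ j → Disjoint (E i) (E j)) :
    evalP p (⋃ i ∈ J, E i) = ∑ i ∈ J, evalP p (E i) := by
  classical
  induction J using Finset.induction_on with
  | empty => simp [evalP_empty hp]
  | @insert a s ha ih =>
    rw [Finset.set_biUnion_insert, Finset.sum_insert ha]
    have hdisj : Disjoint (E a) (⋃ i ∈ s, E i) := by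
      rw [Set.disjoint_iUnion_right]
      intro i
      rw [Set.disjoint_iUnion_right]
      intro hi
      exact hd a (Finset.mem_insert_self a s) i (Finset.mem_insert_of_mem hi)
        (fun h => ha (h ▸ hi))
    rw [evalP_union hp (hE a) (Finset.measurableSet_biUnion s fun i _ => hE i) hdisj,
      ih (fun i hi j hj hij =>
        hd i (Finset.mem_insert_of_mem hi) j (Finset.mem_insert_of_mem hj) hij)]

lemma fiber_disjoint {β : Type*} (χ : S → β) {i j : β} (hij : i ≠ j) :
    Disjoint (χ ⁻¹' {i}) (χ ⁻¹' {j}) := by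
  rw [Set.disjoint_left]
  intro s h1 h2
  simp only [Set.mem_preimage, Set.mem_singleton_iff] at h1 h2
  exact hij (h1.symm.trans h2)

lemma fInt_eq {p : MSet S → ℝ} {φ : S → ℝ} (h : IsSimpleFn φ) :
    fInt p φ = ∑ y ∈ h.1.toFinset, y * evalP p (φ ⁻¹' {y}) := by
  rw [fInt, dif_pos h]
  exact Finset.sum_congr rfl fun y _ => by rw [evalP_eq p (h.2 y)]

lemma preim_comp_eq {β γ : Type*} (χ : S → β) (F : β → γ) (y : γ) :
    (F ∘ χ) ⁻¹' {y} = ⋃ b ∈ (Set.range χ ∩ F ⁻¹' {y}), χ ⁻¹' {b} := by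
  ext s
  simp only [Set.mem_preimage, Function.comp_apply, Set.mem_singleton_iff,
    Set.mem_iUnion, Set.mem_inter_iff, Set.mem_range, exists_prop]
  constructor
  · intro h
    exact ⟨χ s, ⟨⟨s, rfl⟩, h⟩, rfl⟩
  · rintro ⟨b, ⟨_, hb⟩, h⟩
    rw [h]; exact hb

lemma isSimpleFn_comp {β : Type*} (χ : S → β) (hfin : (Set.range χ).Finite)
    (hm : ∀ b, MeasurableSet (χ ⁻¹' {b})) (F : β → ℝ) : IsSimpleFn (F ∘ χ) := by
  refine ⟨?_, fun y => ?_⟩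
  · rw [Set.range_comp]; exact hfin.image F
  · rw [preim_comp_eq]
    exact MeasurableSet.biUnion ((hfin.inter_of_left _).countable) fun b _ => hm b

lemma sum_fiber_eq_one {β : Type*} {p : MSet S → ℝ} (hp : p ∈ ProbCharges S)
    (χ : S → β) (hm : ∀ b, MeasurableSet (χ ⁻¹' {b})) (B : Finset β)
    (hB : ∀ s, χ s ∈ B) : ∑ b ∈ B, evalP p (χ ⁻¹' {b}) = 1 := by
  have huniv : (Set.univ : Set S) = ⋃ b ∈ B, χ ⁻¹' {b} := by
    ext s
    simp only [Set.mem_univ, true_iff, Set.mem_iUnion, Set.mem_preimage,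
      Set.mem_singleton_iff, exists_prop]
    exact ⟨χ s, hB s, rfl⟩
  have h2 := evalP_biUnion hp B _ hm (fun i _ j _ hij => fiber_disjoint χ hij)
  rw [← huniv] at h2
  rw [← h2, evalP_univ hp]

lemma fInt_comp {β : Type*} {p : MSet S → ℝ} (hp : p ∈ ProbCharges S)
    (χ : S → β) (hm : ∀ b, MeasurableSet (χ ⁻¹' {b}))
    (F : β → ℝ) (B : Finset β) (hB : ∀ s, χ s ∈ B) :
    fInt p (F ∘ χ) = ∑ b ∈ B, F b * evalP p (χ ⁻¹' {b}) := by
  classical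
  have hrange : Set.range χ ⊆ ↑B := by rintro _ ⟨s, rfl⟩; exact hB s
  have hfin : (Set.range χ).Finite := B.finite_toSet.subset hrange
  have hs := isSimpleFn_comp χ hfin hm F
  rw [fInt_eq hs]
  set Y := hs.1.toFinset with hY
  set B' := B.filter (fun b => F b ∈ Y) with hB'
  have key : ∀ y ∈ Y, evalP p ((F ∘ χ) ⁻¹' {y})
      = ∑ b ∈ B'.filter (fun b => F b = y), evalP p (χ ⁻¹' {b}) := by
    intro y hy
    have hset : (F ∘ χ) ⁻¹' {y} = ⋃ b ∈ B'.filter (fun b => F b = y), χ ⁻¹' {b} := by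
      ext s
      simp only [Set.mem_preimage, Function.comp_apply, Set.mem_singleton_iff,
        Set.mem_iUnion, Finset.mem_filter, hB', exists_prop]
      constructor
      · intro h
        exact ⟨χ s, ⟨⟨hB s, by rw [h]; exact hy⟩, h⟩, rfl⟩
      · rintro ⟨b, ⟨_, hb⟩, h⟩
        rw [h, hb]
    rw [hset]
    exact evalP_biUnion hp _ _ hm (fun i _ j _ hij => fiber_disjoint χ hij)
  calc ∑ y ∈ Y, y * evalP p ((F ∘ χ) ⁻¹' {y})
      = ∑ y ∈ Y, ∑ b ∈ B'.filter (fun b => F b = y), F b * evalP p (χ ⁻¹' {b}) := by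
        refine Finset.sum_congr rfl fun y hy => ?_
        rw [key y hy, Finset.mul_sum]
        exact Finset.sum_congr rfl fun b hb => by
          rw [(Finset.mem_filter.mp hb).2]
    _ = ∑ b ∈ B', F b * evalP p (χ ⁻¹' {b}) :=
        Finset.sum_fiberwise_of_maps_to (fun b hb => (Finset.mem_filter.mp hb).2) _
    _ = ∑ b ∈ B, F b * evalP p (χ ⁻¹' {b}) := by
        apply Finset.sum_subset (Finset.filter_subset _ _)
        intro b hbB hbB'
        have hfib : χ ⁻¹' {b} = ∅ := by
          ext s
          simp only [Set.mem_preimage, Set.mem_singleton_iff,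
            Set.mem_empty_iff_false, iff_false]
          intro h
          apply hbB'
          rw [Finset.mem_filter]
          refine ⟨hbB, ?_⟩
          rw [hY, Set.Finite.mem_toFinset]
          exact ⟨s, by simp [Function.comp, h]⟩
        rw [hfib, evalP_empty hp, mul_zero]

lemma fInt_eq_sum {p : MSet S → ℝ} (hp : p ∈ ProbCharges S) (φ : S → ℝ)
    (hs : IsSimpleFn φ) (B : Finset ℝ) (hB : ∀ s, φ s ∈ B) :
    fInt p φ = ∑ y ∈ B, y * evalP p (φ ⁻¹' {y}) := by
  have h := fInt_comp hp φ hs.2 id B hB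
  rw [Function.id_comp] at h
  simpa using h

lemma fInt_affine {p : MSet S → ℝ} (hp : p ∈ ProbCharges S) (φ : S → ℝ)
    (hs : IsSimpleFn φ) (a b : ℝ) :
    fInt p (fun s => a * φ s + b) = a * fInt p φ + b := by
  classical
  set B := hs.1.toFinset with hBdef
  have hB : ∀ s, φ s ∈ B := fun s => hs.1.mem_toFinset.mpr ⟨s, rfl⟩
  have h1 := fInt_comp hp φ hs.2 (fun t => a * t + b) B hB
  have h2 := fInt_eq_sum hp φ hs B hB
  have h3 := sum_fiber_eq_one hp φ hs.2 B hB
  have heq : (fun s => a * φ s + b) = (fun t => a * t + b) ∘ φ := rfl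
  rw [heq, h1, h2]
  calc ∑ t ∈ B, (a * t + b) * evalP p (φ ⁻¹' {t})
      = a * ∑ t ∈ B, t * evalP p (φ ⁻¹' {t}) + b * ∑ t ∈ B, evalP p (φ ⁻¹' {t}) := by
        rw [Finset.mul_sum, Finset.mul_sum, ← Finset.sum_add_distrib]
        exact Finset.sum_congr rfl fun t _ => by ring
    _ = a * ∑ t ∈ B, t * evalP p (φ ⁻¹' {t}) + b := by rw [h3, mul_one]

lemma fInt_mem_Icc {p : MSet S → ℝ} (hp : p ∈ ProbCharges S) (φ : S → ℝ)
    (hs : IsSimpleFn φ) (hφ : ∀ s, φ s ∈ Set.Icc (0:ℝ) 1) :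
    fInt p φ ∈ Set.Icc (0:ℝ) 1 := by
  classical
  set B := hs.1.toFinset with hBdef
  have hB : ∀ s, φ s ∈ B := fun s => hs.1.mem_toFinset.mpr ⟨s, rfl⟩
  have hmem : ∀ y ∈ B, y ∈ Set.Icc (0:ℝ) 1 := by
    intro y hy
    obtain ⟨s, rfl⟩ := hs.1.mem_toFinset.mp hy
    exact hφ s
  rw [fInt_eq_sum hp φ hs B hB]
  constructor
  · exact Finset.sum_nonneg fun y hy =>
      mul_nonneg (hmem y hy).1 (evalP_nonneg hp _)
  · calc ∑ y ∈ B, y * evalP p (φ ⁻¹' {y})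
        ≤ ∑ y ∈ B, evalP p (φ ⁻¹' {y}) := Finset.sum_le_sum fun y hy => by
          nlinarith [(hmem y hy).2, evalP_nonneg hp (φ ⁻¹' {y})]
      _ = 1 := sum_fiber_eq_one hp φ hs.2 B hB

lemma continuous_fInt (φ : S → ℝ) (hs : IsSimpleFn φ) :
    Continuous (fun p : MSet S → ℝ => fInt p φ) := by
  have heq : (fun p : MSet S → ℝ => fInt p φ)
      = fun p => ∑ y ∈ hs.1.toFinset, y * evalP p (φ ⁻¹' {y}) :=
    funext fun p => fInt_eq hs
  rw [heq]
  apply continuous_finset_sum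
  intro y _
  have heq2 : (fun p : MSet S → ℝ => evalP p (φ ⁻¹' {y}))
      = fun p => p ⟨φ ⁻¹' {y}, hs.2 y⟩ := funext fun p => evalP_eq p (hs.2 y)
  have h2 : Continuous fun p : MSet S → ℝ => evalP p (φ ⁻¹' {y}) := by
    rw [heq2]; exact continuous_apply _
  exact continuous_const.mul h2

/-- Every continuous linear functional on the product space depends only on
finitely many coordinates. -/
lemma clm_repr [DecidableEq (MSet S)] (L : ((MSet S) → ℝ) →L[ℝ] ℝ) :
    ∃ T : Finset (MSet S), ∀ x : MSet S → ℝ,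
      L x = ∑ A ∈ T, x A * L (Pi.single A 1) := by
  classical
  have h0 : (L ⁻¹' Set.Ioo (-1 : ℝ) 1) ∈ nhds (0 : MSet S → ℝ) := by
    apply L.continuous.continuousAt.preimage_mem_nhds
    rw [map_zero]
    exact isOpen_Ioo.mem_nhds (by norm_num)
  rw [nhds_pi, Filter.mem_pi] at h0
  obtain ⟨I, hIfin, t, ht, hsub⟩ := h0
  refine ⟨hIfin.toFinset, fun x => ?_⟩
  have hvan : ∀ z : MSet S → ℝ, (∀ A ∈ I, z A = 0) → L z = 0 := by
    intro z hz
    by_contra hLz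
    obtain ⟨n, hn⟩ := exists_nat_gt (1 / |L z|)
    have hmem : (n : ℝ) • z ∈ I.pi t := by
      intro A hA
      have : ((n : ℝ) • z) A = 0 := by simp [hz A hA]
      rw [this]
      exact mem_of_mem_nhds (ht A)
    have hin := hsub hmem
    simp only [Set.mem_preimage, map_smul, smul_eq_mul, Set.mem_Ioo] at hin
    have habs : |(n : ℝ) * L z| < 1 := abs_lt.mpr ⟨hin.1, hin.2⟩
    rw [abs_mul, Nat.abs_cast] at habs
    have hpos : 0 < |L z| := abs_pos.mpr hLz
    rw [div_lt_iff₀ hpos] at hn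
    linarith
  set y : MSet S → ℝ :=
    ∑ A ∈ hIfin.toFinset, x A • (Pi.single A (1:ℝ) : MSet S → ℝ) with hy
  have hyA : ∀ A ∈ I, y A = x A := by
    intro A hA
    rw [hy, Finset.sum_apply]
    rw [Finset.sum_eq_single A]
    · simp
    · intro B hB hBA
      simp [Pi.single_apply, Ne.symm hBA]
    · intro h
      exact absurd (hIfin.mem_toFinset.mpr hA) h
  have hzero : L (x - y) = 0 := hvan _ (fun A hA => by simp [hyA A hA])
  have hLx : L x = L y := by
    have := map_sub L x y
    rw [hzero] at this
    linarith
  rw [hLx, hy, map_sum]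
  exact Finset.sum_congr rfl fun A _ => by rw [map_smul, smul_eq_mul]

/-- Realize any finite linear combination of event-evaluations as the integral
of a simple function. -/
lemma exists_simple_comb (T : Finset (MSet S)) (c : MSet S → ℝ) :
    ∃ φ : S → ℝ, IsSimpleFn φ ∧
      ∀ p ∈ ProbCharges S, fInt p φ = ∑ A ∈ T, c A * p A := by
  classical
  let χ : S → ({A : MSet S // A ∈ T} → Bool) := fun s A => decide (s ∈ A.1.1)
  have hm : ∀ b, MeasurableSet (χ ⁻¹' {b}) := by
    intro b
    have hset : χ ⁻¹' {b}
        = ⋂ A : {A : MSet S // A ∈ T}, (if b A then A.1.1 else A.1.1ᶜ) := by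
      ext s
      simp only [Set.mem_preimage, Set.mem_singleton_iff, Set.mem_iInter]
      constructor
      · intro h A
        have hA := congrFun h A
        by_cases hb : b A
        · rw [if_pos hb]
          rw [hb] at hA
          exact of_decide_eq_true hA
        · rw [if_neg hb]
          have hfalse : b A = false := by revert hb; cases b A <;> simp
          exact of_decide_eq_false (hA.trans hfalse)
      · intro h
        funext A
        have hA := h A
        by_cases hb : b A
        · rw [if_pos hb] at hA
          show decide _ = _
          rw [hb]
          exact decide_eq_true hA
        · rw [if_neg hb] at hA
          simp only [Set.mem_compl_iff] at hA
          have hfalse : b A = false := by revert hb; cases b A <;> simp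
          show decide _ = _
          rw [hfalse]
          exact decide_eq_false hA
    rw [hset]
    exact MeasurableSet.iInter fun A => by
      split_ifs
      · exact A.1.2
      · exact A.1.2.compl
  let F : ({A : MSet S // A ∈ T} → Bool) → ℝ :=
    fun b => ∑ A : {A : MSet S // A ∈ T}, if b A then c A.1 else 0
  refine ⟨F ∘ χ, isSimpleFn_comp χ (Set.toFinite _) hm F, fun p hp => ?_⟩
  rw [fInt_comp hp χ hm F Finset.univ (fun s => Finset.mem_univ _)]
  have fib : ∀ A : {A : MSet S // A ∈ T},
      ∑ b ∈ Finset.univ.filter (fun b : {A : MSet S // A ∈ T} → Bool => b A = true),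
        evalP p (χ ⁻¹' {b}) = p A.1 := by
    intro A
    have hset : A.1.1 = ⋃ b ∈ Finset.univ.filter
        (fun b : {A : MSet S // A ∈ T} → Bool => b A = true), χ ⁻¹' {b} := by
      ext s
      simp only [Set.mem_iUnion, Finset.mem_filter, Finset.mem_univ, true_and,
        Set.mem_preimage, Set.mem_singleton_iff, exists_prop]
      constructor
      · intro h
        exact ⟨χ s, show decide _ = _ by rw [decide_eq_true h], rfl⟩
      · rintro ⟨b, hbA, h⟩
        have : χ s A = true := by rw [h]; exact hbA
        simpa [χ] using this
    have hbu := evalP_biUnion hp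
      (Finset.univ.filter (fun b : {A : MSet S // A ∈ T} → Bool => b A = true))
      (fun b : {A : MSet S // A ∈ T} → Bool => χ ⁻¹' {b})
      hm (fun i _ j _ hij => fiber_disjoint χ hij)
    rw [← hset] at hbu
    rw [← hbu, evalP_eq p A.1.2]
  calc ∑ b : {A : MSet S // A ∈ T} → Bool, F b * evalP p (χ ⁻¹' {b})
      = ∑ b : {A : MSet S // A ∈ T} → Bool, ∑ A : {A : MSet S // A ∈ T},
          (if b A then c A.1 * evalP p (χ ⁻¹' {b}) else 0) := by
        refine Finset.sum_congr rfl fun b _ => ?_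
        rw [Finset.sum_mul]
        exact Finset.sum_congr rfl fun A _ => by
          split_ifs <;> simp
    _ = ∑ A : {A : MSet S // A ∈ T}, ∑ b : {A : MSet S // A ∈ T} → Bool,
          (if b A then c A.1 * evalP p (χ ⁻¹' {b}) else 0) := Finset.sum_comm
    _ = ∑ A : {A : MSet S // A ∈ T}, c A.1 *
          ∑ b ∈ Finset.univ.filter
            (fun b : {A : MSet S // A ∈ T} → Bool => b A = true),
            evalP p (χ ⁻¹' {b}) := by
        refine Finset.sum_congr rfl fun A _ => ?_
        rw [Finset.mul_sum, Finset.sum_filter]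
    _ = ∑ A : {A : MSet S // A ∈ T}, c A.1 * p A.1 := by
        exact Finset.sum_congr rfl fun A _ => by rw [fib A]
    _ = ∑ A ∈ T, c A * p A := Finset.sum_coe_sort T (fun A => c A * p A)

end AuxCharges

section AuxActs

variable {S : Type*} [MeasurableSpace S]
variable {V : Type*} [AddCommGroup V] [Module ℝ V]

lemma isSimpleFn_EU {X : Set V} (u : V → ℝ) {f : S → V} (hf : IsAct X f) :
    IsSimpleFn (fun s => u (f s)) :=
  isSimpleFn_comp f hf.2.1 hf.2.2 u

lemma continuous_EU {X : Set V} (u : V → ℝ) {f : S → V} (hf : IsAct X f) :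
    Continuous (EU u f : (MSet S → ℝ) → ℝ) :=
  continuous_fInt _ (isSimpleFn_EU u hf)

lemma EU_const (u : V → ℝ) (x : V) {p : MSet S → ℝ} (hp : p ∈ ProbCharges S) :
    EU u (constAct S x) p = u x := by
  have hm : ∀ b : Unit, MeasurableSet ((fun _ : S => ()) ⁻¹' {b}) := by
    intro b
    have : ((fun _ : S => ()) ⁻¹' {b}) = Set.univ := by
      ext s; simp
    rw [this]; exact MeasurableSet.univ
  have h := fInt_comp hp (fun _ : S => ()) hm (fun _ => u x) {()} (fun s => by simp)
  have huniv : ((fun _ : S => ()) ⁻¹' {()}) = (Set.univ : Set S) := by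
    ext s; simp
  rw [Finset.sum_singleton] at h
  rw [huniv, evalP_univ hp, mul_one] at h
  exact h

lemma minEU_attained {X : Set V} (u : V → ℝ) {C : Set (MSet S → ℝ)}
    (hC : IsCompact C) (hne : C.Nonempty) {f : S → V} (hf : IsAct X f) :
    ∃ p₀ ∈ C, minEU u C f = EU u f p₀ ∧ ∀ p ∈ C, EU u f p₀ ≤ EU u f p := by
  obtain ⟨p₀, hp₀, hmin⟩ := hC.exists_isMinOn hne (continuous_EU u hf).continuousOn
  refine ⟨p₀, hp₀, ?_, fun p hp => hmin hp⟩
  apply IsLeast.csInf_eq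
  exact ⟨⟨p₀, hp₀, rfl⟩, by rintro z ⟨p, hp, rfl⟩; exact hmin hp⟩

lemma maxEU_attained {X : Set V} (u : V → ℝ) {D : Set (MSet S → ℝ)}
    (hD : IsCompact D) (hne : D.Nonempty) {g : S → V} (hg : IsAct X g) :
    ∃ q₀ ∈ D, maxEU u D g = EU u g q₀ ∧ ∀ q ∈ D, EU u g q ≤ EU u g q₀ := by
  obtain ⟨q₀, hq₀, hmax⟩ := hD.exists_isMaxOn hne (continuous_EU u hg).continuousOn
  refine ⟨q₀, hq₀, ?_, fun q hq => hmax hq⟩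
  apply IsGreatest.csSup_eq
  exact ⟨⟨q₀, hq₀, rfl⟩, by rintro z ⟨q, hq, rfl⟩; exact hmax hq⟩

lemma minEU_le {X : Set V} (u : V → ℝ) {C : Set (MSet S → ℝ)} (hC : IsCompact C)
    {f : S → V} (hf : IsAct X f) {q : MSet S → ℝ} (hq : q ∈ C) :
    minEU u C f ≤ EU u f q :=
  csInf_le ((hC.image (continuous_EU u hf)).bddBelow) ⟨q, hq, rfl⟩

lemma le_maxEU {X : Set V} (u : V → ℝ) {D : Set (MSet S → ℝ)} (hD : IsCompact D)
    {f : S → V} (hf : IsAct X f) {q : MSet S → ℝ} (hq : q ∈ D) :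
    EU u f q ≤ maxEU u D f :=
  le_csSup ((hD.image (continuous_EU u hf)).bddAbove) ⟨q, hq, rfl⟩

lemma EU_image_const {C : Set (MSet S → ℝ)} (hne : C.Nonempty)
    (hsub : C ⊆ ProbCharges S) (u : V → ℝ) (x : V) :
    EU u (constAct S x) '' C = {u x} := by
  ext z
  simp only [Set.mem_image, Set.mem_singleton_iff]
  constructor
  · rintro ⟨p, hp, rfl⟩
    exact EU_const u x (hsub hp)
  · rintro rfl
    obtain ⟨p, hp⟩ := hne
    exact ⟨p, hp, EU_const u x (hsub hp)⟩

lemma minEU_const {C : Set (MSet S → ℝ)} (hne : C.Nonempty)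
    (hsub : C ⊆ ProbCharges S) (u : V → ℝ) (x : V) :
    minEU u C (constAct S x) = u x := by
  rw [minEU, EU_image_const hne hsub u x, csInf_singleton]

lemma maxEU_const {C : Set (MSet S → ℝ)} (hne : C.Nonempty)
    (hsub : C ⊆ ProbCharges S) (u : V → ℝ) (x : V) :
    maxEU u C (constAct S x) = u x := by
  rw [maxEU, EU_image_const hne hsub u x, csSup_singleton]

lemma isAct_const {X : Set V} {x : V} (hx : x ∈ X) : IsAct X (constAct S x) := by
  refine ⟨fun _ => hx, ?_, fun v => ?_⟩
  · exact (Set.finite_singleton x).subset (by rintro _ ⟨s, rfl⟩; rfl)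
  · by_cases h : x = v
    · subst h
      have : (constAct S x) ⁻¹' {x} = Set.univ := by ext s; simp [constAct]
      rw [this]; exact MeasurableSet.univ
    · have : (constAct S x) ⁻¹' {v} = ∅ := by ext s; simp [constAct, h]
      rw [this]; exact MeasurableSet.empty

lemma exists_act {X : Set V} (hX : Convex ℝ X) {x y : V} (hx : x ∈ X) (hy : y ∈ X)
    {u : V → ℝ} (hu : IsAffineOn u X) (φ : S → ℝ) (hs : IsSimpleFn φ)
    (hφ : ∀ s, φ s ∈ Set.Icc (0:ℝ) 1) :
    ∃ f : S → V, IsAct X f ∧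
      (fun s => u (f s)) = fun s => (u y - u x) * φ s + u x := by
  classical
  set G : ℝ → V := fun t => t • y + (1 - t) • x with hG
  refine ⟨G ∘ φ, ⟨?_, ?_, ?_⟩, ?_⟩
  · intro s
    exact hX hy hx (hφ s).1 (by linarith [(hφ s).2]) (by ring)
  · rw [Set.range_comp]; exact hs.1.image G
  · intro v
    rw [preim_comp_eq]
    exact MeasurableSet.biUnion ((hs.1.inter_of_left _).countable) fun t _ => hs.2 t
  · funext s
    have h := hu y hy x hx (φ s) (hφ s).1 (hφ s).2
    simp only [Function.comp_apply, hG]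
    rw [h]; ring

end AuxActs

section Statement

variable {S : Type*} [MeasurableSpace S] [Nonempty S]
variable {V : Type*} [AddCommGroup V] [Module ℝ V]

/-- Proposition 1(i): a Bewley preference `≻_B` with
representation `(u, C_B)` is more conservative than the hope-and-prepare
preference `≻_HP` with representation `(u, C_HP, D_HP)` iff
`C_HP ∪ D_HP ⊆ C_B`. -/
theorem statement4 (X : Set V) (hX : Convex ℝ X) (hX2 : ∃ x ∈ X, ∃ y ∈ X, x ≠ y)
    (Rhp Rb : (S → V) → (S → V) → Prop) (u : V → ℝ)
    (CHP DHP CB : Set (MSet S → ℝ))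
    (hhp : IsHPRep X Rhp u CHP DHP) (hb : IsBewleyRep X Rb u CB) :
    (∀ f g, IsAct X f → IsAct X g → Rb f g → Rhp f g) ↔ CHP ∪ DHP ⊆ CB := by
  classical
  obtain ⟨hu_aff, hu_nc, hCne, hDne, hCsub, hDsub, hCcomp, hDcomp, hCconv, hDconv,
    hCD, hHP⟩ := hhp
  obtain ⟨-, -, hBne, hBsub, hBcomp, hBconv, hB⟩ := hb
  constructor
  · -- conservative → inclusion
    intro hcons q hqmem
    by_contra hqB
    have hqP : q ∈ ProbCharges S := by
      rcases hqmem with hq | hq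
      · exact hCsub hq
      · exact hDsub hq
    -- outcomes with distinct utilities
    obtain ⟨x₀, hx₀, y₀, hy₀, hxy⟩ := hu_nc
    obtain ⟨x, hx, y, hy, hlt⟩ : ∃ x ∈ X, ∃ y ∈ X, u x < u y := by
      rcases lt_or_gt_of_ne hxy with h | h
      · exact ⟨x₀, hx₀, y₀, hy₀, h⟩
      · exact ⟨y₀, hy₀, x₀, hx₀, h⟩
    set d : ℝ := u y - u x with hd
    have hdpos : 0 < d := by rw [hd]; linarith
    -- separate q from CB
    obtain ⟨L, r, hLC, hLq⟩ :=
      geometric_hahn_banach_closed_point hBconv hBcomp.isClosed hqB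
    obtain ⟨T, hT⟩ := clm_repr L
    obtain ⟨φ₀, hφ₀s, hφ₀⟩ := exists_simple_comb T (fun A => L (Pi.single A 1))
    have hLp : ∀ p ∈ ProbCharges S, fInt p φ₀ = L p := by
      intro p hp
      rw [hφ₀ p hp, hT p]
      exact Finset.sum_congr rfl fun A _ => mul_comm _ _
    -- rescale φ₀ into [0,1]
    have hbdd : BddAbove (abs '' Set.range φ₀) := (hφ₀s.1.image abs).bddAbove
    obtain ⟨M0, hM0b⟩ := hbdd
    set M : ℝ := max M0 1 with hMdef
    have hM0 : 0 < M := lt_of_lt_of_le one_pos (le_max_right _ _)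
    have hMb : ∀ s, |φ₀ s| ≤ M := fun s =>
      le_trans (hM0b (Set.mem_image_of_mem abs ⟨s, rfl⟩)) (le_max_left _ _)
    set a : ℝ := (2 * M)⁻¹ with hadef
    have ha : 0 < a := by rw [hadef]; positivity
    have haM : a * M = 2⁻¹ := by
      have hMne : M ≠ 0 := hM0.ne'
      rw [hadef]
      field_simp
    set φ : S → ℝ := fun s => a * φ₀ s + 2⁻¹ with hφdef
    have hφs : IsSimpleFn φ := by
      have := isSimpleFn_comp φ₀ hφ₀s.1 hφ₀s.2 (fun t => a * t + 2⁻¹)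
      exact this
    have hφrange : ∀ s, φ s ∈ Set.Icc (0:ℝ) 1 := by
      intro s
      have h1 := hMb s
      rw [abs_le] at h1
      constructor
      · have : a * (-M) ≤ a * φ₀ s := mul_le_mul_of_nonneg_left h1.1 ha.le
        rw [hφdef]
        simp only
        nlinarith
      · have : a * φ₀ s ≤ a * M := mul_le_mul_of_nonneg_left h1.2 ha.le
        rw [hφdef]
        simp only
        nlinarith
    have hφval : ∀ p ∈ ProbCharges S, fInt p φ = a * L p + 2⁻¹ := by
      intro p hp
      rw [hφdef]
      rw [fInt_affine hp φ₀ hφ₀s a 2⁻¹, hLp p hp]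
    set ρ : ℝ := a * r + 2⁻¹ with hρdef
    have hCB_lt : ∀ p ∈ CB, fInt p φ < ρ := by
      intro p hp
      rw [hφval p (hBsub hp), hρdef]
      have := hLC p hp
      nlinarith
    have hq_gt : ρ < fInt q φ := by
      rw [hφval q hqP, hρdef]
      nlinarith
    obtain ⟨p₁, hp₁⟩ := hBne
    have hρ0 : 0 < ρ :=
      lt_of_le_of_lt (fInt_mem_Icc (hBsub hp₁) φ hφs hφrange).1 (hCB_lt p₁ hp₁)
    have hρ1 : ρ < 1 :=
      lt_of_lt_of_le hq_gt (fInt_mem_Icc hqP φ hφs hφrange).2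
    -- EU formula for an act built from a [0,1]-valued simple function
    have hEUform : ∀ (ψ : S → ℝ), IsSimpleFn ψ → (∀ s, ψ s ∈ Set.Icc (0:ℝ) 1) →
        ∃ f : S → V, IsAct X f ∧
          ∀ p ∈ ProbCharges S, EU u f p = d * fInt p ψ + u x := by
      intro ψ hψs hψr
      obtain ⟨f, hf, hfu⟩ := exists_act hX hx hy hu_aff ψ hψs hψr
      refine ⟨f, hf, fun p hp => ?_⟩
      show fInt p (fun s => u (f s)) = _
      rw [hfu, fInt_affine hp ψ hψs d (u x)]
    -- constant act with utility value d * τ + u x for τ ∈ [0,1]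
    have hconst : ∀ τ : ℝ, 0 ≤ τ → τ ≤ 1 →
        ∃ z : V, z ∈ X ∧ u z = d * τ + u x := by
      intro τ h0 h1
      refine ⟨τ • y + (1 - τ) • x, hX hy hx h0 (by linarith) (by ring), ?_⟩
      rw [hu_aff y hy x hx τ h0 h1, hd]; ring
    rcases hqmem with hq | hq
    · -- q ∈ CHP : use the reversed simple function
      set ψ : S → ℝ := fun s => (-1) * φ s + 1 with hψdef
      have hψs : IsSimpleFn ψ :=
        isSimpleFn_comp φ hφs.1 hφs.2 (fun t => (-1) * t + 1)
      have hψr : ∀ s, ψ s ∈ Set.Icc (0:ℝ) 1 := by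
        intro s
        have := hφrange s
        rw [hψdef]
        constructor <;> simp only <;> [linarith [this.2]; linarith [this.1]]
      have hψval : ∀ p ∈ ProbCharges S, fInt p ψ = 1 - fInt p φ := by
        intro p hp
        rw [hψdef, fInt_affine hp φ hφs (-1) 1]; ring
      set ρ' : ℝ := 1 - ρ with hρ'def
      have hρ'0 : 0 ≤ ρ' := by rw [hρ'def]; linarith
      have hρ'1 : ρ' ≤ 1 := by rw [hρ'def]; linarith
      obtain ⟨f, hfAct, hfEU⟩ := hEUform ψ hψs hψr
      obtain ⟨z, hz, hzu⟩ := hconst ρ' hρ'0 hρ'1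
      have hgAct : IsAct X (constAct S z) := isAct_const hz
      have hRb : Rb f (constAct S z) := by
        rw [hB f (constAct S z) hfAct hgAct]
        intro p hp
        rw [EU_const u z (hBsub hp), hzu, hfEU p (hBsub hp), hψval p (hBsub hp)]
        have := hCB_lt p hp
        rw [hρ'def]
        nlinarith
      have hRhp := hcons f (constAct S z) hfAct hgAct hRb
      rw [hHP f (constAct S z) hfAct hgAct] at hRhp
      have h1 := hRhp.1
      rw [minEU_const hCne hCsub u z, hzu] at h1
      have h2 : minEU u CHP f ≤ EU u f q := minEU_le u hCcomp hfAct hq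
      rw [hfEU q hqP, hψval q hqP] at h2
      rw [hρ'def] at h1
      nlinarith
    · -- q ∈ DHP : use φ itself
      obtain ⟨g, hgAct, hgEU⟩ := hEUform φ hφs hφrange
      obtain ⟨z, hz, hzu⟩ := hconst ρ hρ0.le hρ1.le
      have hfAct : IsAct X (constAct S z) := isAct_const hz
      have hRb : Rb (constAct S z) g := by
        rw [hB (constAct S z) g hfAct hgAct]
        intro p hp
        rw [EU_const u z (hBsub hp), hzu, hgEU p (hBsub hp)]
        have := hCB_lt p hp
        nlinarith
      have hRhp := hcons (constAct S z) g hfAct hgAct hRb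
      rw [hHP (constAct S z) g hfAct hgAct] at hRhp
      have h2 := hRhp.2
      rw [maxEU_const hDne hDsub u z, hzu] at h2
      have h3 : EU u g q ≤ maxEU u DHP g := le_maxEU u hDcomp hgAct hq
      rw [hgEU q hqP] at h3
      nlinarith
  · -- inclusion → conservative
    intro hsub f g hf hg hRb
    rw [hB f g hf hg] at hRb
    rw [hHP f g hf hg]
    have hCsubB : CHP ⊆ CB := fun p hp => hsub (Or.inl hp)
    have hDsubB : DHP ⊆ CB := fun p hp => hsub (Or.inr hp)
    constructor
    · obtain ⟨p₀, hp₀, heq, hmin⟩ := minEU_attained u hCcomp hCne hf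
      calc minEU u CHP g ≤ EU u g p₀ := minEU_le u hCcomp hg hp₀
        _ < EU u f p₀ := hRb p₀ (hCsubB hp₀)
        _ = minEU u CHP f := heq.symm
    · obtain ⟨q₀, hq₀, heq, hmax⟩ := maxEU_attained u hDcomp hDne hg
      calc maxEU u DHP g = EU u g q₀ := heq
        _ < EU u f q₀ := hRb q₀ (hDsubB hq₀)
        _ ≤ maxEU u DHP f := le_maxEU u hDcomp hf hq₀

end Statement
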